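/- Let a_0(n), a_1(n) be real sequences converging to l and m respectively, and let x ≥ 0. Then lim_{n→∞} n·V_{n,1}((t−x); x) = (1+2x)(3l − 2m), where the operator is applied to the function t ↦ t − x. -/

import Mathlib

open MeasureTheory Filter Topology

/-- Baskakov basis function `p_{n,k}(x) = C(n+k-1, k) x^k / (1+x)^{n+k}`. -/
noncomputable def bask (n k : ℕ) (x : ℝ) : ℝ :=
  (Nat.choose (n + k - 1) k : ℝ) * x ^ k / (1 + x) ^ (n + k)

/-- Modified basis `p^1_{n,k}(x) = a(x,n) p_{n+1,k}(x) + b(x,n) p_{n+1,k-1}(x)`,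
with `p_{n+1,-1} = 0`. -/
noncomputable def p1 (a0 a1 : ℕ → ℝ) (n k : ℕ) (x : ℝ) : ℝ :=
  (a0 n + a1 n * x) * bask (n + 1) k x
    + (a0 n - a1 n * (1 + x)) * (if k = 0 then 0 else bask (n + 1) (k - 1) x)

/-- First-order modified Baskakov–Durrmeyer operator. -/
noncomputable def V1 (a0 a1 : ℕ → ℝ) (n : ℕ) (f : ℝ → ℝ) (x : ℝ) : ℝ :=
  ((n : ℝ) - 1) * ∑' k : ℕ, p1 a0 a1 n k x * ∫ t in Set.Ioi (0 : ℝ), bask n k t * f t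


section Aux
open Set


lemma intOn_inv_sq : IntegrableOn (fun t : ℝ => ((1+t)^2)⁻¹) (Ioi 0) := by
  have hderiv : ∀ t ∈ Ici (0:ℝ), HasDerivAt (fun t : ℝ => -(1+t)⁻¹) (((1+t)^2)⁻¹) t := by
    intro t ht
    have h1 : (1:ℝ) + t ≠ 0 := by simp at ht; positivity
    have := (((hasDerivAt_id t).const_add 1).inv h1).neg
    refine HasDerivAt.congr_deriv this (Eq.symm ?_)
    simp only [id_eq]
    field_simp
  refine integrableOn_Ioi_deriv_of_nonneg' (l := 0) hderiv (fun t ht => by positivity) ?_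
  have h2 : Tendsto (fun t : ℝ => 1 + t) atTop atTop := tendsto_atTop_add_const_left _ _ tendsto_id
  have := (tendsto_inv_atTop_zero.comp h2).neg
  simpa using this

lemma intOn_pow_div {k M : ℕ} (h : k + 2 ≤ M) :
    IntegrableOn (fun t : ℝ => t^k / (1+t)^M) (Ioi 0) := by
  refine Integrable.mono' intOn_inv_sq ?_ ?_
  · refine (ContinuousOn.div (continuous_pow k).continuousOn
      ((continuous_const.add continuous_id).pow M).continuousOn ?_).aestronglyMeasurable
      measurableSet_Ioi
    intro t ht
    simp only [mem_Ioi] at ht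
    simp only [Pi.pow_apply, Pi.add_apply, id_eq]
    positivity
  · rw [ae_restrict_iff' measurableSet_Ioi]
    filter_upwards with t ht
    simp only [mem_Ioi] at ht
    have h1 : (0:ℝ) < 1 + t := by linarith
    have h1' : (1:ℝ) ≤ 1 + t := by linarith
    rw [Real.norm_eq_abs, abs_of_nonneg (by positivity)]
    rw [div_le_iff₀ (by positivity)]
    calc t^k ≤ (1+t)^k := pow_le_pow_left₀ ht.le (by linarith) k
      _ = ((1+t)^2)⁻¹ * ((1+t)^(k+2)) := by rw [pow_add]; field_simp
      _ ≤ ((1+t)^2)⁻¹ * (1+t)^M := by gcongr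

lemma tendsto_pow_div_zero {k M : ℕ} (h : k + 1 ≤ M) :
    Tendsto (fun t : ℝ => t^k / (1+t)^M) atTop (𝓝 0) := by
  have h2 : Tendsto (fun t : ℝ => 1 + t) atTop atTop := tendsto_atTop_add_const_left _ _ tendsto_id
  have hg : Tendsto (fun t : ℝ => (1+t)⁻¹) atTop (𝓝 0) := tendsto_inv_atTop_zero.comp h2
  refine squeeze_zero' ?_ ?_ hg
  · filter_upwards [eventually_ge_atTop (0:ℝ)] with t ht
    positivity
  · filter_upwards [eventually_ge_atTop (0:ℝ)] with t ht
    have h1 : (0:ℝ) < 1 + t := by linarith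
    have h1' : (1:ℝ) ≤ 1 + t := by linarith
    rw [div_le_iff₀ (by positivity), inv_mul_eq_div, le_div_iff₀ h1]
    calc t^k * (1+t) ≤ (1+t)^k * (1+t) := by
          gcongr <;> linarith
      _ = (1+t)^(k+1) := by rw [pow_succ]
      _ ≤ (1+t)^M := pow_le_pow_right₀ h1' h

lemma Jval (p k : ℕ) : ∫ t in Ioi (0:ℝ), t^k / (1+t)^(p+2+k)
    = (k.factorial * p.factorial : ℝ) / (p+1+k).factorial := by
  induction k with
  | zero =>
    have hderiv : ∀ t ∈ Ici (0:ℝ), HasDerivAt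
        (fun t : ℝ => -(1/((p:ℝ)+1)) * ((1+t)^(p+1))⁻¹) (t^0 / (1+t)^(p+2+0)) t := by
      intro t ht
      simp only [mem_Ici] at ht
      have h1 : (1:ℝ) + t ≠ 0 := by positivity
      have h2 := ((((hasDerivAt_id t).const_add 1).pow (p+1)).inv (pow_ne_zero _ h1)).const_mul
        (-(1/((p:ℝ)+1)))
      refine HasDerivAt.congr_deriv h2 (Eq.symm ?_)
      simp only [id_eq, Pi.pow_apply]
      have hp1 : ((p:ℝ)+1) ≠ 0 := by positivity
      field_simp
      rw [show p+1-1 = p by omega]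
      push_cast; ring
    have hint : IntegrableOn (fun t : ℝ => t^0 / (1+t)^(p+2+0)) (Ioi 0) :=
      intOn_pow_div (by omega)
    have htend : Tendsto (fun t : ℝ => -(1/((p:ℝ)+1)) * ((1+t)^(p+1))⁻¹) atTop (𝓝 0) := by
      have h2 : Tendsto (fun t : ℝ => 1 + t) atTop atTop :=
        tendsto_atTop_add_const_left _ _ tendsto_id
      have h3 : Tendsto (fun t : ℝ => (1+t)^(p+1)) atTop atTop :=
        (tendsto_pow_atTop (by omega)).comp h2
      have := (tendsto_inv_atTop_zero.comp h3).const_mul (-(1/((p:ℝ)+1)))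
      simpa using this
    have key := integral_Ioi_of_hasDerivAt_of_tendsto' hderiv hint htend
    rw [key]
    have hp1 : ((p:ℝ)+1) ≠ 0 := by positivity
    have hf : ((p.factorial:ℝ)) ≠ 0 := by positivity
    simp [Nat.factorial_succ]
    rw [eq_div_iff (by positivity)]
    field_simp
  | succ k ih =>
    have h1' : ∀ t ∈ Ici (0:ℝ), (1:ℝ) + t ≠ 0 := fun t ht => by
      simp only [mem_Ici] at ht; positivity
    have hderiv : ∀ t ∈ Ici (0:ℝ), HasDerivAt
        (fun t : ℝ => t^(k+1) / (1+t)^(p+2+k))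
        (((k:ℝ)+1) * (t^k / (1+t)^(p+2+k)) - ((p:ℝ)+2+k) * (t^(k+1) / (1+t)^(p+2+(k+1)))) t := by
      intro t ht
      have h1 : (1:ℝ) + t ≠ 0 := h1' t ht
      have hd1 : HasDerivAt (fun t : ℝ => t^(k+1)) (((k:ℝ)+1) * t^k) t := by
        have := hasDerivAt_pow (k+1) t
        simpa using this
      have hd2 := (((hasDerivAt_id t).const_add 1).pow (p+2+k)).inv (pow_ne_zero _ h1)
      have h3 := hd1.mul hd2
      have heq : ∀ s : ℝ, s^(k+1) / (1+s)^(p+2+k) = s^(k+1) * ((1+s)^(p+2+k))⁻¹ :=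
        fun s => div_eq_mul_inv _ _
      simp only [heq]
      refine HasDerivAt.congr_deriv h3 (Eq.symm ?_)
      simp only [id_eq, Pi.pow_apply, Pi.inv_apply]
      rw [show p+2+k-1 = p+1+k by omega]
      field_simp
      push_cast; ring
    have hint1 : IntegrableOn (fun t : ℝ => t^k / (1+t)^(p+2+k)) (Ioi 0) :=
      intOn_pow_div (by omega)
    have hint2 : IntegrableOn (fun t : ℝ => t^(k+1) / (1+t)^(p+2+(k+1))) (Ioi 0) :=
      intOn_pow_div (by omega)
    have hint : IntegrableOn (fun t : ℝ =>
        ((k:ℝ)+1) * (t^k / (1+t)^(p+2+k)) - ((p:ℝ)+2+k) * (t^(k+1) / (1+t)^(p+2+(k+1)))) (Ioi 0) :=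
      (hint1.const_mul _).sub (hint2.const_mul _)
    have htend : Tendsto (fun t : ℝ => t^(k+1) / (1+t)^(p+2+k)) atTop (𝓝 0) :=
      tendsto_pow_div_zero (by omega)
    have key := integral_Ioi_of_hasDerivAt_of_tendsto' hderiv hint htend
    rw [integral_sub (hint1.const_mul _) (hint2.const_mul _),
        integral_const_mul, integral_const_mul, ih] at key
    simp only [ne_eq, zero_pow, Nat.succ_ne_zero, not_false_iff] at key
    -- key : (k+1) * (k! * p! / (p+1+k)!) - (p+2+k) * ∫ ... = 0 - 0
    have hsolve : ∫ t in Ioi (0:ℝ), t^(k+1) / (1+t)^(p+2+(k+1))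
        = (((k:ℝ)+1) * ((k.factorial * p.factorial : ℝ) / (p+1+k).factorial)) / ((p:ℝ)+2+k) := by
      have hpk : ((p:ℝ)+2+k) ≠ 0 := by positivity
      norm_num at key
      field_simp at key ⊢
      linarith [key]
    rw [hsolve]
    have hpk : ((p:ℝ)+2+k) ≠ 0 := by positivity
    have hfac : ((p+1+(k+1)).factorial : ℝ) = ((p:ℝ)+2+k) * ((p+1+k).factorial : ℝ) := by
      rw [show p+1+(k+1) = (p+1+k)+1 by omega, Nat.factorial_succ]
      push_cast; ring
    rw [hfac]
    have h5 : ((p+1+k).factorial : ℝ) ≠ 0 := by positivity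
    push_cast [Nat.factorial_succ]
    field_simp

lemma bask_eq (p k : ℕ) : (fun t : ℝ => bask (p+3) k t)
    = fun t => ((p+2+k).choose k : ℝ) * (t^k / (1+t)^(p+3+k)) := by
  funext t
  simp only [bask]
  rw [show p+3+k-1 = p+2+k by omega, mul_div_assoc]

lemma choose_fact (p k : ℕ) :
    (((p+2+k).choose k : ℝ)) * (k.factorial : ℝ) * ((p+2).factorial : ℝ)
      = ((p+2+k).factorial : ℝ) := by
  have := Nat.choose_mul_factorial_mul_factorial (show k ≤ p+2+k by omega)
  rw [show p+2+k-k = p+2 by omega] at this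
  exact_mod_cast congrArg (Nat.cast : ℕ → ℝ) this

lemma integrable_bask (p k : ℕ) : IntegrableOn (fun t : ℝ => bask (p+3) k t) (Ioi 0) := by
  rw [bask_eq]
  exact (intOn_pow_div (by omega)).const_mul _

lemma integrable_mul_bask (p k : ℕ) :
    IntegrableOn (fun t : ℝ => t * bask (p+3) k t) (Ioi 0) := by
  have : (fun t : ℝ => t * bask (p+3) k t)
      = fun t => ((p+2+k).choose k : ℝ) * (t^(k+1) / (1+t)^(p+3+k)) := by
    funext t
    simp only [bask]
    rw [show p+3+k-1 = p+2+k by omega]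
    rw [pow_succ]
    ring
  rw [this]
  exact (intOn_pow_div (by omega)).const_mul _

lemma integral_bask (p k : ℕ) :
    ∫ t in Ioi (0:ℝ), bask (p+3) k t = 1/((p:ℝ)+2) := by
  rw [bask_eq, integral_const_mul]
  rw [show p+3+k = (p+1)+2+k by omega, Jval (p+1) k]
  have h1 := choose_fact p k
  have h2 : ((p+1+1+k).factorial : ℝ) ≠ 0 := by positivity
  have h3 : ((p+2).factorial : ℝ) = ((p:ℝ)+2) * ((p+1).factorial : ℝ) := by
    rw [show p+2 = (p+1)+1 by omega, Nat.factorial_succ]; push_cast; ring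
  rw [show p+1+1+k = p+2+k by omega]
  rw [h3] at h1
  have hF : ((p+2+k).factorial:ℝ) ≠ 0 := by positivity
  field_simp
  linear_combination h1

lemma integral_mul_bask (p k : ℕ) :
    ∫ t in Ioi (0:ℝ), t * bask (p+3) k t = ((k:ℝ)+1)/(((p:ℝ)+1)*((p:ℝ)+2)) := by
  have heq : (fun t : ℝ => t * bask (p+3) k t)
      = fun t => ((p+2+k).choose k : ℝ) * (t^(k+1) / (1+t)^(p+2+(k+1))) := by
    funext t
    simp only [bask]
    rw [show p+3+k-1 = p+2+k by omega, show p+2+(k+1) = p+3+k by omega, pow_succ]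
    ring
  rw [heq, integral_const_mul, Jval p (k+1)]
  have h1 := choose_fact p k
  have h2 : ((p+1+(k+1)).factorial : ℝ) = ((p+2+k).factorial : ℝ) := by
    rw [show p+1+(k+1) = p+2+k by omega]
  rw [h2]
  have h3 : ((p+2).factorial : ℝ) = (((p:ℝ)+1)*((p:ℝ)+2)) * ((p).factorial : ℝ) := by
    rw [show p+2 = (p+1)+1 by omega, Nat.factorial_succ, Nat.factorial_succ]; push_cast; ring
  rw [h3] at h1
  have h4 : ((k+1).factorial : ℝ) = ((k:ℝ)+1) * (k.factorial : ℝ) := by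
    rw [Nat.factorial_succ]; push_cast; ring
  rw [h4]
  have hF : ((p+2+k).factorial:ℝ) ≠ 0 := by positivity
  have hp1 : ((p:ℝ)+1) ≠ 0 := by positivity
  have hp2 : ((p:ℝ)+2) ≠ 0 := by positivity
  field_simp
  linear_combination h1

variable {x : ℝ} (hx : 0 ≤ x)

lemma hx1 (hx : 0 ≤ x) : (0:ℝ) < 1 + x := by linarith

lemma hy_norm (hx : 0 ≤ x) : ‖x/(1+x)‖ < 1 := by
  have h1 := hx1 hx
  rw [Real.norm_eq_abs, abs_of_nonneg (by positivity), div_lt_one h1]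
  linarith

lemma one_sub_y (hx : 0 ≤ x) : 1 - x/(1+x) = (1+x)⁻¹ := by
  have h1 := hx1 hx
  field_simp; ring

lemma bask_succ_eq (n k : ℕ) (hx : 0 ≤ x) :
    bask (n+1) k x = (((k+n).choose n : ℝ) * (x/(1+x))^k) / (1+x)^(n+1) := by
  have h1 := hx1 hx
  simp only [bask]
  rw [show n+1+k-1 = n+k by omega]
  rw [show (n+k).choose k = (k+n).choose n by
    rw [add_comm k n]
    conv_lhs => rw [← Nat.choose_symm (show k ≤ n+k by omega)]
    congr 1; omega]
  rw [div_pow]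
  rw [show n+1+k = (n+1)+k by omega, pow_add]
  have h2 : (1+x)^(n+1) ≠ 0 := by positivity
  have h3 : (1+x)^k ≠ 0 := by positivity
  field_simp

lemma hasSum_bask (n : ℕ) (hx : 0 ≤ x) : HasSum (fun k => bask (n+1) k x) 1 := by
  have h1 := hx1 hx
  have h := (hasSum_choose_mul_geometric_of_norm_lt_one (𝕜 := ℝ) n (hy_norm hx)).div_const
    ((1+x)^(n+1))
  have he : (fun k => (((k+n).choose n : ℝ) * (x/(1+x))^k) / (1+x)^(n+1))
      = fun k => bask (n+1) k x := by
    funext k; rw [bask_succ_eq n k hx]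
  rw [he] at h
  refine (congrArg (HasSum _) ?_).mpr h
  rw [one_sub_y hx, inv_pow]
  field_simp

lemma hasSum_mul_bask (n : ℕ) (hx : 0 ≤ x) :
    HasSum (fun k : ℕ => ((k:ℝ)+1) * bask (n+1) k x) (((n:ℝ)+1)*x + 1) := by
  have h1 := hx1 hx
  set y := x/(1+x) with hy
  have hyn := hy_norm hx
  have hA := (hasSum_choose_mul_geometric_of_norm_lt_one (𝕜 := ℝ) (n+1) hyn).mul_left ((n:ℝ)+1)
  have hB := (hasSum_choose_mul_geometric_of_norm_lt_one (𝕜 := ℝ) n hyn).mul_left (n:ℝ)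
  have hC := hA.sub hB
  -- pointwise identity: (k+1) * choose(k+n,n) = (n+1)*choose(k+(n+1),n+1) - n*choose(k+n,n)
  have hpt : ∀ k : ℕ, ((n:ℝ)+1) * (((k+(n+1)).choose (n+1) : ℝ) * y^k)
      - (n:ℝ) * (((k+n).choose n : ℝ) * y^k)
      = ((k:ℝ)+1) * (((k+n).choose n : ℝ) * y^k) := by
    intro k
    have h0 := Nat.add_one_mul_choose_eq (k+n) n
    have hidR : ((n:ℝ)+1) * (((k+(n+1)).choose (n+1)) : ℝ)
        = ((k:ℝ)+(n:ℝ)+1) * (((k+n).choose n) : ℝ) := by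
      have h1 := congrArg (Nat.cast : ℕ → ℝ) h0
      push_cast at h1
      rw [show k+(n+1) = k+n+1 by omega]
      push_cast
      linarith [h1]
    linear_combination y^k * hidR
  rw [funext hpt] at hC
  have hD := hC.div_const ((1+x)^(n+1))
  have he : (fun k : ℕ => (((k:ℝ)+1) * (((k+n).choose n : ℝ) * y^k)) / (1+x)^(n+1))
      = fun k : ℕ => ((k:ℝ)+1) * bask (n+1) k x := by
    funext k; rw [bask_succ_eq n k hx]; ring
  rw [he] at hD
  refine (congrArg (HasSum _) ?_).mpr hD
  rw [one_sub_y hx, inv_pow, inv_pow]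
  have h2 : (1+x)^(n+1) ≠ 0 := by positivity
  field_simp
  ring

variable {x : ℝ}

lemma hasSum_Q (n : ℕ) (hx : 0 ≤ x) :
    HasSum (fun k : ℕ => if k = 0 then 0 else bask (n+1) (k-1) x) 1 := by
  set Q : ℕ → ℝ := fun k => if k = 0 then 0 else bask (n+1) (k-1) x with hQ
  have h' : HasSum (fun j : ℕ => Q (j+1)) 1 := by
    have he : (fun j : ℕ => Q (j+1)) = fun j => bask (n+1) j x := by
      funext j; simp [hQ]
    rw [he]; exact hasSum_bask n hx
  have := (hasSum_nat_add_iff (f := Q) 1).mp h'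
  simpa [hQ] using this

lemma hasSum_mul_Q (n : ℕ) (hx : 0 ≤ x) :
    HasSum (fun k : ℕ => ((k:ℝ)+1) * (if k = 0 then 0 else bask (n+1) (k-1) x))
      (((n:ℝ)+1)*x + 2) := by
  set g : ℕ → ℝ := fun k => ((k:ℝ)+1) * (if k = 0 then 0 else bask (n+1) (k-1) x) with hg
  have h' : HasSum (fun j : ℕ => g (j+1)) (((n:ℝ)+1)*x + 2) := by
    have he : (fun j : ℕ => g (j+1))
        = fun j : ℕ => ((j:ℝ)+1) * bask (n+1) j x + bask (n+1) j x := by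
      funext j; simp [hg]; push_cast; ring
    rw [he]
    have := (hasSum_mul_bask n hx).add (hasSum_bask n hx)
    convert this using 1; ring
  have := (hasSum_nat_add_iff (f := g) 1).mp h'
  simpa [hg] using this

lemma V1_closed (a0 a1 : ℕ → ℝ) (hx : 0 ≤ x) (p : ℕ) :
    V1 a0 a1 (p+3) (fun t => t - x) x
      = ((p:ℝ)+2) * (((((p:ℝ)+1)*((p:ℝ)+2))⁻¹ *
          ((a0 (p+3) + a1 (p+3)*x) * (((p:ℝ)+4)*x+1)
            + (a0 (p+3) - a1 (p+3)*(1+x)) * (((p:ℝ)+4)*x+2)))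
        - (x*((p:ℝ)+2)⁻¹) * ((a0 (p+3) + a1 (p+3)*x) + (a0 (p+3) - a1 (p+3)*(1+x)))) := by
  set n := p + 3 with hn
  set A := a0 n + a1 n * x with hA
  set B := a0 n - a1 n * (1+x) with hB
  have hp1 : ((p:ℝ)+1) ≠ 0 := by positivity
  have hp2 : ((p:ℝ)+2) ≠ 0 := by positivity
  -- integral values
  have hIk : ∀ k : ℕ, (∫ t in Ioi (0:ℝ), bask n k t * ((fun t => t - x) t))
      = ((k:ℝ)+1) * (((p:ℝ)+1)*((p:ℝ)+2))⁻¹ - x * ((p:ℝ)+2)⁻¹ := by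
    intro k
    have he : (fun t : ℝ => bask n k t * ((fun t => t - x) t))
        = fun t => t * bask n k t - x * bask n k t := by funext t; ring
    rw [he, integral_sub (integrable_mul_bask p k) ((integrable_bask p k).const_mul x),
      integral_const_mul, integral_bask, integral_mul_bask]
    field_simp
  -- HasSum facts
  have HS1 : HasSum (fun k : ℕ => p1 a0 a1 n k x) (A + B) := by
    have := ((hasSum_bask (n := n) hx).mul_left A).add ((hasSum_Q (n := n) hx).mul_left B)
    simpa [p1, hA, hB] using this
  have HS2 : HasSum (fun k : ℕ => ((k:ℝ)+1) * p1 a0 a1 n k x)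
      (A * (((n:ℝ)+1)*x+1) + B * (((n:ℝ)+1)*x+2)) := by
    have h := ((hasSum_mul_bask (n := n) hx).mul_left A).add
      ((hasSum_mul_Q (n := n) hx).mul_left B)
    have he : (fun k : ℕ => A * (((k:ℝ)+1) * bask (n+1) k x)
        + B * (((k:ℝ)+1) * (if k = 0 then 0 else bask (n+1) (k-1) x)))
        = fun k : ℕ => ((k:ℝ)+1) * p1 a0 a1 n k x := by
      funext k; simp only [p1, hA, hB]; ring
    rwa [he] at h
  set C := (((p:ℝ)+1)*((p:ℝ)+2))⁻¹ with hC
  set D := x * ((p:ℝ)+2)⁻¹ with hD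
  have HS3 : HasSum (fun k : ℕ => p1 a0 a1 n k x * (((k:ℝ)+1) * C - D))
      (C * (A * (((n:ℝ)+1)*x+1) + B * (((n:ℝ)+1)*x+2)) - D * (A + B)) := by
    have h := (HS2.mul_left C).sub (HS1.mul_left D)
    have he : (fun k : ℕ => C * (((k:ℝ)+1) * p1 a0 a1 n k x) - D * p1 a0 a1 n k x)
        = fun k : ℕ => p1 a0 a1 n k x * (((k:ℝ)+1) * C - D) := by
      funext k; ring
    rwa [he] at h
  have htsum : (∑' k : ℕ, p1 a0 a1 n k x * ∫ t in Ioi (0:ℝ), bask n k t * ((fun t => t - x) t))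
      = C * (A * (((n:ℝ)+1)*x+1) + B * (((n:ℝ)+1)*x+2)) - D * (A + B) := by
    rw [tsum_congr (fun k => by rw [hIk k])]
    exact HS3.tsum_eq
  rw [V1, htsum]
  have hcast : ((n:ℝ)) = (p:ℝ) + 3 := by rw [hn]; push_cast; ring
  rw [hcast]
  norm_num
  ring

theorem V1_limit_central_moment_one (a0 a1 : ℕ → ℝ) (l m : ℝ)
    (ha0 : Tendsto a0 atTop (𝓝 l)) (ha1 : Tendsto a1 atTop (𝓝 m))
    (x : ℝ) (hx : 0 ≤ x) :
    Tendsto (fun n : ℕ => (n : ℝ) * V1 a0 a1 n (fun t => t - x) x) atTop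
      (𝓝 ((1 + 2 * x) * (3 * l - 2 * m))) := by
  set R : ℕ → ℝ := fun n => x*(2*a0 n - a1 n)*(3*(n:ℝ)/((n:ℝ)-2))
    + ((n:ℝ)/((n:ℝ)-2))*(3*a0 n - 2*a1 n - a1 n*x) with hR
  have hev : ∀ᶠ n : ℕ in atTop, (n:ℝ) * V1 a0 a1 n (fun t => t - x) x = R n := by
    filter_upwards [eventually_ge_atTop 3] with n hn
    obtain ⟨p, rfl⟩ : ∃ p, n = p+3 := ⟨n-3, by omega⟩
    rw [V1_closed a0 a1 hx p, hR]
    have h1 : ((p:ℝ)+1) ≠ 0 := by positivity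
    have h2 : ((p:ℝ)+2) ≠ 0 := by positivity
    have h1' : (1:ℝ)+(p:ℝ) ≠ 0 := by positivity
    have h3 : (((p:ℕ)+3:ℕ):ℝ) - 2 = (p:ℝ)+1 := by push_cast; ring
    push_cast
    rw [show (p:ℝ)+3-2 = (p:ℝ)+1 by ring]
    field_simp
    ring
  -- limit of R
  have hden : Tendsto (fun n : ℕ => (n:ℝ) - 2) atTop atTop :=
    tendsto_atTop_add_const_right _ _ tendsto_natCast_atTop_atTop
  have t2 : Tendsto (fun n : ℕ => (n:ℝ)/((n:ℝ)-2)) atTop (𝓝 1) := by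
    have h0 : Tendsto (fun n : ℕ => 1 + 2/((n:ℝ)-2)) atTop (𝓝 1) := by
      have hc : Tendsto (fun _ : ℕ => (2:ℝ)) atTop (𝓝 2) := tendsto_const_nhds
      have := hc.div_atTop hden
      simpa using (tendsto_const_nhds (x := (1:ℝ))).add this
    refine h0.congr' ?_
    filter_upwards [eventually_ge_atTop 3] with n hn
    have h4 : ((n:ℝ)-2) ≠ 0 := by
      have : (3:ℝ) ≤ (n:ℝ) := by exact_mod_cast hn
      linarith
    field_simp; ring
  have t1 : Tendsto (fun n : ℕ => 3*(n:ℝ)/((n:ℝ)-2)) atTop (𝓝 3) := by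
    have := t2.const_mul 3
    simp only [mul_div_assoc] at *
    simpa using this
  have hg1 : Tendsto (fun n => x*(2*a0 n - a1 n)) atTop (𝓝 (x*(2*l - m))) :=
    ((ha0.const_mul 2).sub ha1).const_mul x
  have hg2 : Tendsto (fun n => 3*a0 n - 2*a1 n - a1 n*x) atTop (𝓝 (3*l - 2*m - m*x)) :=
    ((ha0.const_mul 3).sub (ha1.const_mul 2)).sub (ha1.mul_const x)
  have hlim : Tendsto R atTop (𝓝 (x*(2*l - m)*3 + 1*(3*l - 2*m - m*x))) :=
    (hg1.mul t1).add (t2.mul hg2)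
  have hval : (1 + 2*x)*(3*l - 2*m) = x*(2*l - m)*3 + 1*(3*l - 2*m - m*x) := by ring
  rw [hval]
  exact hlim.congr' (hev.mono fun n h => h.symm)

end Aux
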